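/- The Fokker–Planck filter preserves realizability for scalar moments: if û ∈ ℝ^{N+1} satisfies û = ⟨φ u_ex⟩ for some u_ex : Θ → (u₋, u₊), and if the evolution ∂_λ u = L u with u(0,·) = u_ex obeys the maximum principle (so u(λ,ξ) ∈ (u₋, u₊) for all λ ≥ 0, ξ ∈ Θ), and L φ_i = μ_i φ_i with L self-adjoint, then for every λ ≥ 0 the filtered moment vector F(λ)û with F(λ) = diag(e^{μ_0 λ},...,e^{μ_N λ}) equals ⟨φ u(λ,·)⟩ and hence is realizable by a function with values in (u₋, u₊). -/

import Mathlib

open MeasureTheory Set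

/-- The Fokker–Planck filter `F(λ) = diag(e^{μᵢ λ})` preserves realizability of scalar
moment vectors: the filtered moments are the moments of the evolved solution `u(λ,·)`,
which takes values in `(ulo, uhi)` by the maximum principle. -/
theorem fokker_planck_filter_preserves_realizability
    (N : ℕ) (Θ : Set ℝ) (fΞ : ℝ → ℝ)
    (φ : Fin (N + 1) → ℝ → ℝ) (μs : Fin (N + 1) → ℝ)
    (L : (ℝ → ℝ) →ₗ[ℝ] (ℝ → ℝ))
    -- L is self-adjoint with respect to the weighted inner product ∫_Θ f g f_Ξ
    (hsa : ∀ f g : ℝ → ℝ,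
      (∫ ξ in Θ, L f ξ * g ξ * fΞ ξ) = ∫ ξ in Θ, f ξ * L g ξ * fΞ ξ)
    -- φᵢ is an eigenfunction of L with eigenvalue μᵢ
    (heig : ∀ i, L (φ i) = fun ξ => μs i * φ i ξ)
    (ulo uhi : ℝ)
    (uex : ℝ → ℝ) (huex : ∀ ξ ∈ Θ, uex ξ ∈ Ioo ulo uhi)
    (uhat : Fin (N + 1) → ℝ)
    (hmom : ∀ i, uhat i = ∫ ξ in Θ, φ i ξ * uex ξ * fΞ ξ)
    (u : ℝ → ℝ → ℝ)
    -- u solves ∂_λ u = L u with initial data u_ex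
    (hic : ∀ ξ, u 0 ξ = uex ξ)
    (hpde : ∀ (l : ℝ) (ξ : ℝ), HasDerivAt (fun t : ℝ => u t ξ) (L (u l) ξ) l)
    -- maximum principle
    (hmax : ∀ l : ℝ, 0 ≤ l → ∀ ξ ∈ Θ, u l ξ ∈ Ioo ulo uhi)
    -- differentiation of the moments commutes with integration
    (hcomm : ∀ (i : Fin (N + 1)) (l : ℝ),
      HasDerivAt (fun t : ℝ => ∫ ξ in Θ, φ i ξ * u t ξ * fΞ ξ)
        (∫ ξ in Θ, φ i ξ * L (u l) ξ * fΞ ξ) l) :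
    ∀ l : ℝ, 0 ≤ l →
      (∀ i, Real.exp (μs i * l) * uhat i = ∫ ξ in Θ, φ i ξ * u l ξ * fΞ ξ) ∧
      ∃ w : ℝ → ℝ, (∀ ξ ∈ Θ, w ξ ∈ Ioo ulo uhi) ∧
        ∀ i, Real.exp (μs i * l) * uhat i = ∫ ξ in Θ, φ i ξ * w ξ * fΞ ξ := by
  -- key ODE fact for the moments
  have key : ∀ i l, Real.exp (μs i * l) * uhat i = ∫ ξ in Θ, φ i ξ * u l ξ * fΞ ξ := by
    intro i l
    set g : ℝ → ℝ := fun t => ∫ ξ in Θ, φ i ξ * u t ξ * fΞ ξ with hg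
    have hder : ∀ t, HasDerivAt g (μs i * g t) t := by
      intro t
      have h1 := hcomm i t
      have h2 : (∫ ξ in Θ, φ i ξ * L (u t) ξ * fΞ ξ) = μs i * g t := by
        rw [← hsa (φ i) (u t)]
        rw [heig i]
        simp only [hg]
        rw [← MeasureTheory.integral_const_mul]
        congr 1
        ext ξ
        ring
      rwa [h2] at h1
    have hconst : ∀ t, g t * Real.exp (-(μs i) * t) = g 0 := by
      intro s
      have hd : ∀ t, HasDerivAt (fun t => g t * Real.exp (-(μs i) * t)) 0 t := by
        intro t
        have he : HasDerivAt (fun t : ℝ => Real.exp (-(μs i) * t))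
            (-(μs i) * Real.exp (-(μs i) * t)) t := by
          simpa [mul_comm] using ((hasDerivAt_id t).const_mul (-(μs i))).exp
        have := (hder t).mul he
        refine this.congr_deriv ?_
        ring
      have hdiff : Differentiable ℝ (fun t => g t * Real.exp (-(μs i) * t)) :=
        fun t => (hd t).differentiableAt
      have := is_const_of_deriv_eq_zero hdiff (fun t => (hd t).deriv) s 0
      simpa using this
    have h0 : g 0 = uhat i := by
      rw [hmom i, hg]
      simp only []
      congr 1
      ext ξ
      rw [hic ξ]
    have := hconst l
    rw [h0] at this
    have hexp : Real.exp (-(μs i) * l) ≠ 0 := Real.exp_ne_zero _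
    have : g l = uhat i * Real.exp (μs i * l) := by
      field_simp at this ⊢
      rw [← this]
      rw [mul_assoc, ← Real.exp_add]
      simp
    have h2 : (∫ ξ in Θ, φ i ξ * u l ξ * fΞ ξ) = uhat i * Real.exp (μs i * l) := this
    rw [h2]; ring
  intro l hl
  refine ⟨fun i => key i l, u l, hmax l hl, fun i => key i l⟩
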